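/- The total number of cyclic subgroups of C_{2^a} × C_{2^b} with a ≥ b ≥ 1 is 2^b(3 + a − b) − 2. -/

import Mathlib

open AddSubgroup Finset
open scoped Classical

lemma zmul_cyclic' {G : Type} [AddGroup G] (g : G) : IsAddCyclic (zmultiples g) := by
  refine ⟨⟨⟨g, mem_zmultiples g⟩, fun x => ?_⟩⟩
  obtain ⟨x, hx⟩ := x
  obtain ⟨k, hk⟩ := mem_zmultiples_iff.mp hx
  exact ⟨k, by ext; simpa using hk⟩

lemma genCount' {G : Type} [AddCommGroup G] [Fintype G]
    (g₀ : G) (n : ℕ) (hn : addOrderOf g₀ = n) :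
    (univ.filter fun g => addOrderOf g = n ∧ zmultiples g = zmultiples g₀).card
      = Nat.totient n := by
  have hcardH : Nat.card (zmultiples g₀) = n := by rw [Nat.card_zmultiples, hn]
  have hstep : (univ.filter fun g => addOrderOf g = n ∧ zmultiples g = zmultiples g₀)
      = univ.filter fun g => g ∈ zmultiples g₀ ∧ addOrderOf g = n := by
    ext g
    simp only [mem_filter, mem_univ, true_and]
    constructor
    · rintro ⟨h1, h2⟩
      exact ⟨h2 ▸ mem_zmultiples g, h1⟩
    · rintro ⟨h1, h2⟩
      refine ⟨h2, ?_⟩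
      have hle : zmultiples g ≤ zmultiples g₀ := zmultiples_le_of_mem h1
      refine AddSubgroup.eq_of_le_of_card_ge hle ?_
      rw [hcardH, Nat.card_zmultiples, h2]
  rw [hstep]
  have := zmul_cyclic' g₀
  have hcardH' : Fintype.card (zmultiples g₀) = n := by
    rw [← Nat.card_eq_fintype_card, hcardH]
  have hc : (univ.filter fun h : zmultiples g₀ => addOrderOf h = n).card
      = Nat.totient n := by
    have := IsAddCyclic.card_addOrderOf_eq_totient (α := zmultiples g₀)
      (d := n) (by rw [hcardH'])
    convert this using 2
  rw [← hc]
  apply Finset.card_bij (fun (h : G) hh => (⟨h, by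
      exact ((Finset.mem_filter (s := univ)).mp hh).2.1⟩ : zmultiples g₀)) ?_ ?_ ?_
  · intro a ha
    simp only [mem_filter, mem_univ, true_and] at ha ⊢
    rw [AddSubgroup.addOrderOf_mk]
    exact ha.2
  · intro a ha b hb hab
    simpa using congrArg Subtype.val hab
  · intro h hh
    simp only [mem_filter, mem_univ, true_and] at hh
    refine ⟨(h : G), ?_, rfl⟩
    simp only [mem_filter, mem_univ, true_and]
    exact ⟨h.2, by rw [AddSubgroup.addOrderOf_coe]; exact hh⟩

lemma torsionCount' {G : Type} [AddCommGroup G] [Fintype G] [IsAddCyclic G]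
    (N : ℕ) (hN : N ∣ Fintype.card G) :
    (univ.filter fun x : G => addOrderOf x ∣ N).card = N := by
  have hN0 : N ≠ 0 := by
    rintro rfl
    exact (Fintype.card_pos (α := G)).ne' (Nat.zero_dvd.mp hN)
  have key2 : ∀ d ∈ N.divisors,
      ((univ.filter fun x : G => addOrderOf x ∣ N).filter
        fun x => addOrderOf x = d).card
      = (univ.filter fun x : G => addOrderOf x = d).card := by
    intro d hd
    congr 1
    ext x
    simp only [mem_filter, mem_univ, true_and]
    exact ⟨fun h => h.2, fun h => ⟨h ▸ (Nat.mem_divisors.mp hd).1, h⟩⟩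
  rw [Finset.card_eq_sum_card_fiberwise (f := fun x : G => addOrderOf x)
    (t := N.divisors) (fun x hx => by
      simp only [Finset.mem_coe, mem_filter, mem_univ, true_and] at hx
      exact Nat.mem_divisors.mpr ⟨hx, hN0⟩)]
  rw [Finset.sum_congr rfl key2]
  have : ∀ d ∈ N.divisors,
      (univ.filter fun x : G => addOrderOf x = d).card = Nat.totient d := by
    intro d hd
    have hdc : d ∣ Fintype.card G := (Nat.mem_divisors.mp hd).1.trans hN
    have := IsAddCyclic.card_addOrderOf_eq_totient (α := G) (d := d) hdc
    convert this using 2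
  rw [Finset.sum_congr rfl this, Nat.sum_totient]

lemma zmodTorsion' (c k : ℕ) :
    (univ.filter fun x : ZMod (2 ^ c) => addOrderOf x ∣ 2 ^ k).card = 2 ^ min k c := by
  haveI : NeZero (2 ^ c) := ⟨by positivity⟩
  have hcard : Fintype.card (ZMod (2 ^ c)) = 2 ^ c := ZMod.card (2 ^ c)
  have hiff : ∀ x : ZMod (2 ^ c), (addOrderOf x ∣ 2 ^ k ↔ addOrderOf x ∣ 2 ^ min k c) := by
    intro x
    have hdc : addOrderOf x ∣ 2 ^ c := by
      have h := addOrderOf_dvd_natCard x; rwa [Nat.card_zmod] at h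
    obtain ⟨j, hj, hx⟩ := (Nat.dvd_prime_pow Nat.prime_two).mp hdc
    rw [hx, Nat.pow_dvd_pow_iff_le_right one_lt_two, Nat.pow_dvd_pow_iff_le_right one_lt_two]
    omega
  have heq : (univ.filter fun x : ZMod (2 ^ c) => addOrderOf x ∣ 2 ^ k)
      = univ.filter fun x : ZMod (2 ^ c) => addOrderOf x ∣ 2 ^ min k c := by
    ext x
    simp only [mem_filter, mem_univ, true_and]
    exact hiff x
  rw [heq]
  exact torsionCount' _ (by rw [hcard]; exact pow_dvd_pow 2 (min_le_right k c))

lemma prodTorsion' (a b m : ℕ) :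
    (univ.filter fun g : ZMod (2 ^ a) × ZMod (2 ^ b) => addOrderOf g ∣ 2 ^ m).card
      = 2 ^ min m a * 2 ^ min m b := by
  have h1 : (univ.filter fun g : ZMod (2 ^ a) × ZMod (2 ^ b) => addOrderOf g ∣ 2 ^ m)
      = (univ.filter fun x : ZMod (2 ^ a) => addOrderOf x ∣ 2 ^ m) ×ˢ
        (univ.filter fun y : ZMod (2 ^ b) => addOrderOf y ∣ 2 ^ m) := by
    ext g
    simp only [mem_filter, mem_univ, true_and, Finset.mem_product]
    rw [Prod.addOrderOf, Nat.lcm_dvd_iff]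
  rw [h1, Finset.card_product, zmodTorsion', zmodTorsion']

lemma baseSum' (b : ℕ) :
    ∑ k ∈ Finset.range (b + 1), (if k = 0 then 1 else 3 * 2 ^ (k - 1))
      = 3 * 2 ^ b - 2 := by
  induction b with
  | zero => simp
  | succ b ih =>
    rw [Finset.sum_range_succ, ih]
    have h2 : (1:ℕ) ≤ 2 ^ b := Nat.one_le_two_pow
    simp only [Nat.succ_ne_zero, if_false, Nat.add_sub_cancel]
    rw [pow_succ]
    omega

/-- The total number of cyclic subgroups of `C_{2^a} × C_{2^b}` with `a ≥ b ≥ 1` is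
`2^b (3 + a - b) - 2`. -/
theorem total_cyclic_subgroups_two_factors (a b : ℕ) (hb : 1 ≤ b) (hab : b ≤ a) :
    Set.ncard {H : AddSubgroup (ZMod (2 ^ a) × ZMod (2 ^ b)) |
      ∃ x, H = AddSubgroup.zmultiples x} = 2 ^ b * (3 + a - b) - 2 := by
  haveI : NeZero (2 ^ a) := ⟨by positivity⟩
  haveI : NeZero (2 ^ b) := ⟨by positivity⟩
  set G := ZMod (2 ^ a) × ZMod (2 ^ b) with hG
  set f : G → AddSubgroup G := fun g => zmultiples g with hf
  -- every element has order 2^k for some k ≤ a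
  have horder : ∀ g : G, ∃ k ≤ a, addOrderOf g = 2 ^ k := by
    intro g
    have h1 : addOrderOf g.1 ∣ 2 ^ a := by
      have h := addOrderOf_dvd_natCard g.1; rwa [Nat.card_zmod] at h
    have h2 : addOrderOf g.2 ∣ 2 ^ a := by
      have h := addOrderOf_dvd_natCard g.2; rw [Nat.card_zmod] at h
      exact h.trans (pow_dvd_pow 2 hab)
    have hdvd : addOrderOf g ∣ 2 ^ a := by
      rw [Prod.addOrderOf, Nat.lcm_dvd_iff]; exact ⟨h1, h2⟩
    obtain ⟨k, hk, hgk⟩ := (Nat.dvd_prime_pow Nat.prime_two).mp hdvd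
    exact ⟨k, hk, hgk⟩
  -- the set as a finset
  have hset : {H : AddSubgroup G | ∃ x, H = zmultiples x}
      = ↑(Finset.image f Finset.univ) := by
    ext H
    simp only [Set.mem_setOf_eq, Finset.coe_image, Set.mem_image, Finset.mem_coe,
      Finset.coe_univ, Set.image_univ, Set.mem_range]
    exact ⟨fun ⟨x, hx⟩ => ⟨x, hx.symm⟩, fun ⟨x, hx⟩ => ⟨x, hx.symm⟩⟩
  rw [hset, Set.ncard_coe_finset]
  -- decompose univ by order
  set Om : ℕ → Finset G := fun k => univ.filter fun g => addOrderOf g = 2 ^ k with hOm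
  have huniv : (Finset.univ : Finset G) = (Finset.range (a + 1)).biUnion Om := by
    ext g
    simp only [mem_univ, true_iff, Finset.mem_biUnion, Finset.mem_range, hOm,
      mem_filter, mem_univ, true_and]
    obtain ⟨k, hk, hgk⟩ := horder g
    exact ⟨k, by omega, hgk⟩
  rw [huniv, Finset.biUnion_image]
  -- disjointness of the images
  have hdisj : ∀ i ∈ Finset.range (a + 1), ∀ j ∈ Finset.range (a + 1), i ≠ j →
      Disjoint ((Om i).image f) ((Om j).image f) := by
    intro i _ j _ hij
    rw [Finset.disjoint_left]
    rintro H hHi hHj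
    simp only [Finset.mem_image, hOm, mem_filter, mem_univ, true_and] at hHi hHj
    obtain ⟨g, hg, rfl⟩ := hHi
    obtain ⟨g', hg', hgg'⟩ := hHj
    have hcc : addOrderOf g' = addOrderOf g := by
      rw [← Nat.card_zmultiples g, ← Nat.card_zmultiples g']
      exact congrArg (fun H : AddSubgroup G => Nat.card H) hgg'
    rw [hg, hg'] at hcc
    exact hij (Nat.pow_right_injective le_rfl hcc.symm)
  rw [Finset.card_biUnion hdisj]
  -- per-class counting : fiber counting over the image
  have hfiber : ∀ k, ((Om k).image f).card * Nat.totient (2 ^ k) = (Om k).card := by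
    intro k
    have hfib_eq : ∀ H ∈ (Om k).image f,
        ((Om k).filter fun g => f g = H).card = Nat.totient (2 ^ k) := by
      intro H hH
      obtain ⟨g₀, hg₀, rfl⟩ := Finset.mem_image.mp hH
      simp only [hOm, mem_filter, mem_univ, true_and] at hg₀
      have hgen := genCount' g₀ (2 ^ k) hg₀
      rw [← hgen]
      congr 1
      ext g
      simp only [hOm, Finset.mem_filter, mem_univ, true_and, hf]
    rw [Finset.card_eq_sum_card_fiberwise (f := f) (t := (Om k).image f)
      (fun g hg => Finset.mem_image_of_mem f hg), Finset.sum_congr rfl hfib_eq,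
      Finset.sum_const, smul_eq_mul]
  -- counts of Om k
  have htot : ∀ k, 1 ≤ k → Nat.totient (2 ^ k) = 2 ^ (k - 1) := by
    intro k hk
    rw [Nat.totient_prime_pow Nat.prime_two hk]
    simp
  have hOmcard : ∀ k, 1 ≤ k → k ≤ a →
      (Om k).card = 2 ^ min k a * 2 ^ min k b - 2 ^ min (k-1) a * 2 ^ min (k-1) b := by
    intro k hk1 hka
    have hsub : (univ.filter fun g : G => addOrderOf g ∣ 2 ^ (k-1))
        ⊆ univ.filter fun g : G => addOrderOf g ∣ 2 ^ k := by
      intro g hg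
      simp only [mem_filter, mem_univ, true_and] at hg ⊢
      exact hg.trans (pow_dvd_pow 2 (by omega))
    have hOmeq : Om k = (univ.filter fun g : G => addOrderOf g ∣ 2 ^ k)
        \ (univ.filter fun g : G => addOrderOf g ∣ 2 ^ (k-1)) := by
      ext g
      simp only [hOm, Finset.mem_sdiff, mem_filter, mem_univ, true_and]
      obtain ⟨j, hj, hgj⟩ := horder g
      rw [hgj, Nat.pow_dvd_pow_iff_le_right one_lt_two,
        Nat.pow_dvd_pow_iff_le_right one_lt_two]
      constructor
      · intro h
        have : j = k := Nat.pow_right_injective le_rfl h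
        omega
      · rintro ⟨h1, h2⟩
        have : j = k := by omega
        rw [this]
    rw [hOmeq, Finset.card_sdiff_of_subset hsub, prodTorsion', prodTorsion']
  -- explicit per-class values
  have hval : ∀ k ∈ Finset.range (a + 1), ((Om k).image f).card
      = if k = 0 then 1 else if k ≤ b then 3 * 2 ^ (k - 1) else 2 ^ b := by
    intro k hk
    rw [Finset.mem_range] at hk
    rcases Nat.eq_zero_or_pos k with rfl | hkpos
    · simp only [if_pos rfl]
      have h0 : Om 0 = {(0 : G)} := by
        ext g
        simp only [hOm, mem_filter, mem_univ, true_and, pow_zero,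
          AddMonoid.addOrderOf_eq_one_iff, Finset.mem_singleton]
      rw [h0]
      simp
    · have hka : k ≤ a := by omega
      have hcard := hOmcard k hkpos hka
      have hmka : min k a = k := by omega
      have hmk1a : min (k-1) a = k - 1 := by omega
      have hfib := hfiber k
      rw [htot k hkpos] at hfib
      by_cases hkb : k ≤ b
      · have hmkb : min k b = k := by omega
        have hmk1b : min (k-1) b = k - 1 := by omega
        rw [hmka, hmkb, hmk1a, hmk1b] at hcard
        simp only [if_neg (by omega : ¬ k = 0), if_pos hkb]
        have key : ((Om k).image f).card * 2 ^ (k-1)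
            = (3 * 2 ^ (k - 1)) * 2 ^ (k-1) := by
          rw [hfib, hcard]
          have h2k : (2:ℕ) ^ k = 2 * 2 ^ (k - 1) := by
            conv_lhs => rw [show k = (k-1) + 1 by omega]
            ring
          rw [h2k]; ring_nf
          have := Nat.one_le_two_pow (n := k - 1)
          generalize (2:ℕ) ^ (k-1) = x at *
          cases x with
          | zero => omega
          | succ n => omega
        exact Nat.eq_of_mul_eq_mul_right (by positivity) key
      · have hmkb : min k b = b := by omega
        have hmk1b : min (k-1) b = b := by omega
        rw [hmka, hmkb, hmk1a, hmk1b] at hcard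
        simp only [if_neg (by omega : ¬ k = 0), if_neg hkb]
        have key : ((Om k).image f).card * 2 ^ (k-1) = 2 ^ b * 2 ^ (k-1) := by
          rw [hfib, hcard]
          have h2k : (2:ℕ) ^ k = 2 * 2 ^ (k - 1) := by
            conv_lhs => rw [show k = (k-1) + 1 by omega]
            ring
          rw [h2k]
          ring_nf
          omega
        exact Nat.eq_of_mul_eq_mul_right (by positivity) key
  rw [Finset.sum_congr rfl hval]
  -- final arithmetic
  have hsplit : Finset.range (a + 1) = Finset.Ico 0 (a + 1) := by
    rw [Finset.range_eq_Ico]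
  rw [hsplit, ← Finset.sum_Ico_consecutive _ (Nat.zero_le (b+1)) (by omega : b + 1 ≤ a + 1)]
  have hfirst : ∑ k ∈ Finset.Ico 0 (b + 1),
      (if k = 0 then 1 else if k ≤ b then 3 * 2 ^ (k - 1) else 2 ^ b)
      = 3 * 2 ^ b - 2 := by
    rw [← Finset.range_eq_Ico, ← baseSum' b]
    apply Finset.sum_congr rfl
    intro k hk
    rw [Finset.mem_range] at hk
    rcases Nat.eq_zero_or_pos k with rfl | hkpos
    · simp
    · have hk0 : ¬ (k = 0) := by omega
      have hkb : k ≤ b := by omega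
      simp only [if_neg hk0, if_pos hkb]
  have hsecond : ∑ k ∈ Finset.Ico (b + 1) (a + 1),
      (if k = 0 then 1 else if k ≤ b then 3 * 2 ^ (k - 1) else 2 ^ b)
      = (a - b) * 2 ^ b := by
    rw [Finset.sum_congr rfl (fun k hk => ?_), Finset.sum_const, Nat.card_Ico,
      smul_eq_mul]
    · congr 1; omega
    · rw [Finset.mem_Ico] at hk
      rw [if_neg (by omega), if_neg (by omega)]
  rw [hfirst, hsecond]
  have h3ab : 3 + a - b = 3 + (a - b) := by omega
  rw [h3ab, Nat.mul_add]
  have h1 : (1:ℕ) ≤ 2 ^ b := Nat.one_le_two_pow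
  have h2 : 2 ^ b * (a - b) = (a - b) * 2 ^ b := Nat.mul_comm _ _
  generalize hX : (a - b) * 2 ^ b = X at *
  omega
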